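/- Let R ≥ 5 and v ≥ 1 be integers and let F : ℕ → ℕ be a finitely supported function with F(1) = 0, satisfying 2·Σ_{n≥1} n·F(n) = R(R+1)·v and 4·Σ_{n≥1} F(n) = R(R−1)·v + 4R. Then 2·F(2) ≥ R(R+1). -/

import Mathlib

/-- Arithmetic face-count lemma for prime-complete generalized melons: if `R ≥ 5`,
`v ≥ 1`, and `F : ℕ →₀ ℕ` (the number of `(0i)`-faces of each half-length) satisfies
`F 1 = 0`, `2·Σ_{n} n·F(n) = R(R+1)v` and `4·Σ_{n ≥ 1} F(n) = R(R-1)v + 4R`, then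
`2·F(2) ≥ R(R+1)`. -/
theorem stmt13 (R v : ℕ) (hR : 5 ≤ R) (hv : 1 ≤ v) (F : ℕ →₀ ℕ)
    (hF1 : F 1 = 0)
    (h1 : 2 * ∑ n ∈ F.support, n * F n = R * (R + 1) * v)
    (h2 : 4 * ∑ n ∈ F.support.erase 0, F n = R * (R - 1) * v + 4 * R) :
    2 * F 2 ≥ R * (R + 1) := by
  obtain ⟨k, rfl⟩ : ∃ k, R = k + 5 := ⟨R - 5, by omega⟩
  set s := (F.support.erase 0).erase 1 with hs
  have hA : ∑ n ∈ F.support, n * F n = ∑ n ∈ s, n * F n := by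
    rw [hs, Finset.sum_erase _ (by simp [hF1]), Finset.sum_erase _ (by simp)]
  have hB : ∑ n ∈ F.support.erase 0, F n = ∑ n ∈ s, F n :=
    (Finset.sum_erase _ hF1).symm
  rw [hA] at h1
  rw [hB] at h2
  set A := ∑ n ∈ s, n * F n with hAdef
  set B := ∑ n ∈ s, F n with hBdef
  have e1 : 2 * A = (k + 5) * (k + 6) * v := by rw [h1]
  have e2 : 4 * B = (k + 5) * (k + 4) * v + 4 * (k + 5) := by
    rw [h2, show k + 5 - 1 = k + 4 by omega]
  have key : 4 * (k + 6) * B = 2 * (k + 4) * A + 4 * (k + 5) * (k + 6) := by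
    calc 4 * (k + 6) * B = (k + 6) * (4 * B) := by ring
      _ = (k + 6) * ((k + 5) * (k + 4) * v + 4 * (k + 5)) := by rw [e2]
      _ = (k + 4) * ((k + 5) * (k + 6) * v) + 4 * (k + 5) * (k + 6) := by ring
      _ = (k + 4) * (2 * A) + 4 * (k + 5) * (k + 6) := by rw [e1]
      _ = 2 * (k + 4) * A + 4 * (k + 5) * (k + 6) := by ring
  have hmem3 : ∀ n ∈ s.erase 2, 3 ≤ n := by
    intro n hn
    simp only [hs, Finset.mem_erase] at hn
    omega
  set A' := ∑ n ∈ s.erase 2, n * F n with hA'def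
  set B' := ∑ n ∈ s.erase 2, F n with hB'def
  have hAB : A = 2 * F 2 + A' ∧ B = F 2 + B' := by
    by_cases h : 2 ∈ s
    · constructor
      · rw [hAdef, ← Finset.add_sum_erase s (fun n => n * F n) h]
      · rw [hBdef, ← Finset.add_sum_erase s F h]
    · have hF2 : F 2 = 0 := by
        by_contra h2'
        exact h (by simp [hs, Finset.mem_erase, Finsupp.mem_support_iff, h2'])
      rw [hA'def, hB'def, Finset.erase_eq_of_notMem h]
      simp [hF2]
      exact ⟨hAdef, hBdef⟩
  have hineq : 2 * (k + 6) * B' ≤ (k + 4) * A' := by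
    rw [hB'def, hA'def, Finset.mul_sum, Finset.mul_sum]
    apply Finset.sum_le_sum
    intro n hn
    have h3 := hmem3 n hn
    have hcoef : 2 * (k + 6) ≤ (k + 4) * n := by nlinarith
    calc 2 * (k + 6) * F n ≤ (k + 4) * n * F n := Nat.mul_le_mul_right _ hcoef
      _ = (k + 4) * (n * F n) := by ring
  obtain ⟨hA2, hB2⟩ := hAB
  rw [hA2, hB2] at key
  nlinarith [key, hineq]
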